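/- (Policy improvement lower bound) Let π and π' be stationary policies in a discounted MDP, let ε = max_{s,a} |A_π(s,a)|, and let C = 4εγ/(1−γ)². Then J(π') − J(π) ≥ L_π(π') − C · max_s D_KL(π(·|s) ∥ π'(·|s)), where L_π(π') = Σ_s ρ_π(s) Σ_a π'(a|s) A_π(s,a) is the surrogate advantage computed under the discounted state visitation distribution ρ_π of π. -/

import Mathlib

open Finset

private lemma log_ge_frac {t : ℝ} (ht : 1 ≤ t) : 2 * (t - 1) / (t + 1) ≤ Real.log t := by
  set f : ℝ → ℝ := fun x => Real.log x - 2 * (x - 1) / (x + 1) with hf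
  have key : ∀ x ∈ Set.Ici (1:ℝ), 0 ≤ f x := by
    intro x hx
    have h1 : f 1 = 0 := by simp [hf]
    have hmono : MonotoneOn f (Set.Ici (1:ℝ)) := by
      apply monotoneOn_of_deriv_nonneg (convex_Ici 1)
      · apply ContinuousOn.sub
        · exact Real.continuousOn_log.mono (by intro y hy; simp at hy ⊢; linarith)
        · apply ContinuousOn.div
          · fun_prop
          · fun_prop
          · intro y hy; simp at hy; positivity
      · intro y hy
        rw [interior_Ici] at hy
        simp only [Set.mem_Ioi] at hy
        apply DifferentiableAt.differentiableWithinAt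
        apply DifferentiableAt.sub
        · exact Real.differentiableAt_log (by positivity)
        · apply DifferentiableAt.div <;> try fun_prop
          positivity
      · intro y hy
        rw [interior_Ici] at hy
        simp only [Set.mem_Ioi] at hy
        have hy0 : (0:ℝ) < y := by linarith
        have hy1 : y + 1 ≠ 0 := by positivity
        have hd : HasDerivAt f (1 / y - 4 / (y + 1) ^ 2) y := by
          have h2 : HasDerivAt (fun x : ℝ => 2 * (x - 1) / (x + 1)) (4 / (y + 1) ^ 2) y := by
            have := (((hasDerivAt_id y).sub_const 1).const_mul 2).div
              ((hasDerivAt_id y).add_const 1) hy1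
            exact this.congr_deriv (by simp only [id]; field_simp; ring)
          exact ((Real.hasDerivAt_log hy0.ne').sub h2).congr_deriv (by rw [one_div])
        rw [hd.deriv]
        have he : 1 / y - 4 / (y + 1) ^ 2 = (y - 1)^2 / (y * (y+1)^2) := by
          field_simp
          ring
        rw [he]
        positivity
    have := hmono (by simp : (1:ℝ) ∈ Set.Ici (1:ℝ)) hx hx
    linarith [h1 ▸ this]
  have := key t ht
  simp only [hf] at this
  linarith

private lemma log_le_frac {u : ℝ} (hu : 1 ≤ u) : Real.log u ≤ (u - u⁻¹) / 2 := by
  set f : ℝ → ℝ := fun x => (x - x⁻¹) / 2 - Real.log x with hf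
  have key : ∀ x ∈ Set.Ici (1:ℝ), 0 ≤ f x := by
    intro x hx
    have h1 : f 1 = 0 := by simp [hf]
    have hmono : MonotoneOn f (Set.Ici (1:ℝ)) := by
      apply monotoneOn_of_deriv_nonneg (convex_Ici 1)
      · apply ContinuousOn.sub
        · apply ContinuousOn.div_const
          apply ContinuousOn.sub continuousOn_id
          intro y hy
          simp only [Set.mem_Ici] at hy
          exact (continuousAt_inv₀ (by linarith)).continuousWithinAt
        · exact Real.continuousOn_log.mono (by intro y hy; simp at hy ⊢; linarith)
      · intro y hy
        rw [interior_Ici] at hy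
        simp only [Set.mem_Ioi] at hy
        have hy0 : (0:ℝ) < y := by linarith
        apply DifferentiableAt.differentiableWithinAt
        apply DifferentiableAt.sub
        · apply DifferentiableAt.div_const
          exact differentiableAt_id.sub (differentiableAt_inv hy0.ne')
        · exact Real.differentiableAt_log hy0.ne'
      · intro y hy
        rw [interior_Ici] at hy
        simp only [Set.mem_Ioi] at hy
        have hy0 : (0:ℝ) < y := by linarith
        have hd : HasDerivAt f ((1 + 1/y^2)/2 - 1/y) y := by
          have h2 : HasDerivAt (fun x : ℝ => (x - x⁻¹) / 2) ((1 + 1/y^2)/2) y := by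
            have := ((hasDerivAt_id y).sub (hasDerivAt_inv hy0.ne')).div_const 2
            exact this.congr_deriv (by rw [one_div, sub_neg_eq_add])
          have h3 := h2.sub (Real.hasDerivAt_log hy0.ne')
          exact h3.congr_deriv (by rw [one_div y])
        rw [hd.deriv]
        have he : (1 + 1/y^2)/2 - 1/y = (y - 1)^2 / (2 * y^2) := by
          field_simp
          ring
        rw [he]
        positivity
    have := hmono (by simp : (1:ℝ) ∈ Set.Ici (1:ℝ)) hx hx
    linarith [h1 ▸ this]
  have := key u hu
  simp only [hf] at this
  linarith

private lemma ptwise_pinsker {p q : ℝ} (hp : 0 ≤ p) (hq : 0 < q) :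
    (p - q)^2 / (2*(p+q)) ≤ p * Real.log (p/q) - p + q := by
  rcases eq_or_lt_of_le hp with h0 | hp0
  · rw [← h0]
    have : ((0:ℝ) - q)^2 / (2*(0+q)) = q/2 := by
      field_simp
      ring
    rw [this]
    simp
    linarith
  rcases le_or_gt q p with hqp | hpq
  · have ht : 1 ≤ p / q := (one_le_div hq).mpr hqp
    have hlog := log_ge_frac ht
    have h1 : 2 * (p/q - 1) / (p/q + 1) = 2 * (p - q) / (p + q) := by
      rw [div_eq_div_iff (by positivity) (by positivity)]
      field_simp
    rw [h1] at hlog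
    have h2 : 2 * (p - q) / (p + q) * p ≤ p * Real.log (p/q) := by
      have := mul_le_mul_of_nonneg_right hlog hp
      linarith
    set r := 2 * (p - q) / (p + q) * p with hrdef
    have hr : r * (p + q) = 2 * (p - q) * p := by
      rw [hrdef]
      field_simp
    rw [div_le_iff₀ (by positivity)]
    nlinarith [sq_nonneg (p - q), hr, h2]
  · have ht : 1 ≤ q / p := (one_le_div hp0).mpr hpq.le
    have hlog := log_le_frac ht
    have hlogflip : Real.log (p/q) = - Real.log (q/p) := by
      rw [← Real.log_inv]
      congr 1
      field_simp
    have h2 : -((q/p - (q/p)⁻¹)/2) ≤ Real.log (p/q) := by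
      rw [hlogflip]; linarith
    have h3 : (-((q/p - (q/p)⁻¹)/2)) * p ≤ p * Real.log (p/q) := by
      have := mul_le_mul_of_nonneg_right h2 hp
      linarith
    set r := (-((q/p - (q/p)⁻¹)/2)) * p with hrdef
    have hr : r * (2*q) = -((q-p)*(q+p)) := by
      rw [hrdef]
      have : (q/p)⁻¹ = p/q := by
        field_simp
      rw [this]
      field_simp
      ring
    rw [div_le_iff₀ (by positivity)]
    nlinarith [hr, mul_nonneg (mul_nonneg (sub_nonneg.2 h3) (by positivity : (0:ℝ) ≤ 2*(p+q))) hq.le,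
      mul_nonneg hp0.le (sq_nonneg (q-p))]

private lemma pinsker_quarter {A : Type*} [Fintype A] (p q : A → ℝ)
    (hp0 : ∀ a, 0 ≤ p a) (hq0 : ∀ a, 0 < q a)
    (hp1 : ∑ a, p a = 1) (hq1 : ∑ a, q a = 1) :
    (∑ a, |p a - q a|)^2 / 4 ≤ ∑ a, p a * Real.log (p a / q a) := by
  have key : ∑ a, (p a - q a)^2 / (2*(p a + q a)) ≤ ∑ a, p a * Real.log (p a / q a) := by
    have h1 : ∑ a, p a * Real.log (p a / q a)
        = ∑ a, (p a * Real.log (p a / q a) - p a + q a) := by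
      rw [Finset.sum_add_distrib, Finset.sum_sub_distrib, hp1, hq1]
      ring
    rw [h1]
    apply Finset.sum_le_sum
    intro a _
    exact ptwise_pinsker (hp0 a) (hq0 a)
  refine le_trans ?_ key
  have hsed := Finset.sq_sum_div_le_sum_sq_div Finset.univ (fun a => |p a - q a|)
    (g := fun a => 2*(p a + q a)) (fun a _ => by have := hp0 a; have := hq0 a; positivity)
  have hg : ∑ a, 2*(p a + q a) = 4 := by
    rw [← Finset.mul_sum, Finset.sum_add_distrib, hp1, hq1]
    norm_num
  rw [hg] at hsed
  refine le_trans hsed ?_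
  apply le_of_eq
  apply Finset.sum_congr rfl
  intro a _
  rw [sq_abs]

private lemma stoch_resolvent {S : Type*} [Fintype S] [Nonempty S] {γ : ℝ}
    (hγ0 : 0 < γ) (hγ1 : γ < 1)
    (K : S → S → ℝ) (hK0 : ∀ s s', 0 ≤ K s s') (hK1 : ∀ s, ∑ s', K s s' = 1) :
    ∃ b : S → S → ℝ,
      (∀ j u, 0 ≤ b j u) ∧
      (∀ u, ∑ j, b j u = 1/(1-γ)) ∧
      (∀ (w : S → ℝ) (s : S),
        (∑ u, w u * b s u) - γ * ∑ s', (∑ u, w u * b s' u) * K s' s = w s) ∧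
      (∀ y : S → ℝ, ∑ s, |∑ u, y u * b s u| ≤ (∑ u, |y u|) / (1 - γ)) := by
  set T : (S → ℝ) →ₗ[ℝ] (S → ℝ) :=
    { toFun := fun x s => x s - γ * ∑ s', K s s' * x s'
      map_add' := by
        intro x y; funext s
        simp only [Pi.add_apply]
        rw [show ∑ s', K s s' * (x s' + y s') =
          (∑ s', K s s' * x s') + ∑ s', K s s' * y s' from by
            rw [← Finset.sum_add_distrib]
            exact Finset.sum_congr rfl fun _ _ => by ring]
        ring
      map_smul' := by
        intro c x; funext s
        simp only [Pi.smul_apply, smul_eq_mul, RingHom.id_apply]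
        rw [show ∑ s', K s s' * (c * x s') = c * ∑ s', K s s' * x s' from by
          rw [Finset.mul_sum]
          exact Finset.sum_congr rfl fun _ _ => by ring]
        ring } with hT
  have hTapp : ∀ (x : S → ℝ) (s : S), T x s = x s - γ * ∑ s', K s s' * x s' :=
    fun x s => rfl
  have hinj : Function.Injective T := by
    rw [← LinearMap.ker_eq_bot]
    rw [LinearMap.ker_eq_bot']
    intro x hx
    obtain ⟨s0, -, hs0⟩ := Finset.exists_mem_eq_sup' Finset.univ_nonempty (fun s => |x s|)
    have hle : ∀ s, |x s| ≤ |x s0| := by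
      intro s
      have h := Finset.le_sup' (fun s => |x s|) (Finset.mem_univ s)
      rw [hs0] at h
      exact h
    have hx0 : ∀ s, x s = γ * ∑ s', K s s' * x s' := by
      intro s
      have := congrFun hx s
      rw [hTapp] at this
      simp only [Pi.zero_apply] at this
      linarith
    have hbound : |x s0| ≤ γ * |x s0| := by
      calc |x s0| = γ * |∑ s', K s0 s' * x s'| := by
            rw [hx0 s0, abs_mul, abs_of_pos hγ0]
        _ ≤ γ * ∑ s', K s0 s' * |x s0| := by
            apply mul_le_mul_of_nonneg_left _ hγ0.le
            refine le_trans (Finset.abs_sum_le_sum_abs _ _) ?_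
            apply Finset.sum_le_sum
            intro s' _
            rw [abs_mul, abs_of_nonneg (hK0 s0 s')]
            exact mul_le_mul_of_nonneg_left (hle s') (hK0 s0 s')
        _ = γ * |x s0| := by rw [← Finset.sum_mul, hK1, one_mul]
    have hm : |x s0| ≤ 0 := by nlinarith
    funext s
    have := le_trans (hle s) hm
    have := abs_nonneg (x s)
    simp only [Pi.zero_apply]
    have : |x s| = 0 := le_antisymm ‹|x s| ≤ 0› (abs_nonneg _)
    exact abs_eq_zero.mp this
  have hsurj : Function.Surjective T := LinearMap.injective_iff_surjective.mp hinj
  have hpos : ∀ (v w : S → ℝ), T v = w → (∀ s, 0 ≤ w s) → ∀ s, 0 ≤ v s := by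
    intro v w hvw hw
    obtain ⟨s0, -, hs0⟩ := Finset.exists_mem_eq_inf' Finset.univ_nonempty v
    have hge : ∀ s, v s0 ≤ v s := by
      intro s
      have h := Finset.inf'_le v (Finset.mem_univ s)
      rw [hs0] at h
      exact h
    have hv0 : v s0 = γ * ∑ s', K s0 s' * v s' + w s0 := by
      have := congrFun hvw s0
      rw [hTapp] at this
      linarith
    have hsum : v s0 ≤ ∑ s', K s0 s' * v s' := by
      calc v s0 = ∑ s', K s0 s' * v s0 := by rw [← Finset.sum_mul, hK1, one_mul]
        _ ≤ ∑ s', K s0 s' * v s' := by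
            apply Finset.sum_le_sum
            intro s' _
            exact mul_le_mul_of_nonneg_left (hge s') (hK0 s0 s')
    have h0 : 0 ≤ v s0 := by nlinarith [hw s0]
    intro s
    exact le_trans h0 (hge s)
  -- columns
  classical
  choose b hb using fun j => hsurj (fun s => if s = j then (1:ℝ) else 0)
  have hb0 : ∀ j u, 0 ≤ b j u := by
    intro j u
    exact hpos (b j) _ (hb j) (fun s => by by_cases h : s = j <;> simp [h]) u
  have hbsum : ∀ u, ∑ j, b j u = 1/(1-γ) := by
    intro u
    have h1 : T (∑ j, b j) = fun _ => 1 := by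
      rw [map_sum]
      funext s
      rw [Finset.sum_apply]
      simp only [hb]
      simp
    have h2 : T (fun _ => 1/(1-γ)) = fun _ => 1 := by
      funext s
      rw [hTapp]
      rw [← Finset.sum_mul, hK1, one_mul]
      rw [mul_div_assoc', div_sub_div_same, div_eq_one_iff_eq (by linarith : (1:ℝ) - γ ≠ 0)]
      ring
    have := hinj (h1.trans h2.symm)
    have := congrFun this u
    rw [Finset.sum_apply] at this
    exact this
  refine ⟨b, hb0, hbsum, ?_, ?_⟩
  · -- adjoint solution formula
    have hbT : ∀ (x : S → ℝ) (u : S),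
        ∑ j, b j u * (x j - γ * ∑ s', K j s' * x s') = x u := by
      intro x u
      have h1 : T (∑ j, (T x j) • b j) = T x := by
        rw [map_sum]
        funext s
        rw [Finset.sum_apply]
        simp only [map_smul, Pi.smul_apply, hb, smul_eq_mul]
        simp
      have := hinj h1
      have := congrFun this u
      rw [Finset.sum_apply] at this
      simp only [Pi.smul_apply, smul_eq_mul] at this
      rw [← this]
      apply Finset.sum_congr rfl
      intro j _
      rw [hTapp]
      ring
    have hbrk : ∀ s u, b s u - γ * ∑ j, b j u * K j s = (if u = s then (1:ℝ) else 0) := by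
      intro s u
      have h := hbT (fun t => if t = s then (1:ℝ) else 0) u
      simp only [mul_ite, mul_one, mul_zero, Finset.sum_ite_eq', Finset.mem_univ, if_true] at h
      rw [← h]
      rw [show ∑ j, b j u * ((if j = s then (1:ℝ) else 0) - γ * K j s)
          = (∑ j, b j u * (if j = s then (1:ℝ) else 0)) - γ * ∑ j, b j u * K j s from by
        rw [Finset.mul_sum, ← Finset.sum_sub_distrib]
        exact Finset.sum_congr rfl fun j _ => by ring]
      congr 1
      simp
    intro w s
    have hswap : ∑ s', (∑ u, w u * b s' u) * K s' s = ∑ u, w u * ∑ j, b j u * K j s := by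
      rw [show (∑ s', (∑ u, w u * b s' u) * K s' s) = ∑ s', ∑ u, w u * (b s' u * K s' s) from
        Finset.sum_congr rfl fun s' _ => by
          rw [Finset.sum_mul]; exact Finset.sum_congr rfl fun u _ => by ring]
      rw [Finset.sum_comm]
      exact Finset.sum_congr rfl fun u _ => by rw [Finset.mul_sum]
    calc (∑ u, w u * b s u) - γ * ∑ s', (∑ u, w u * b s' u) * K s' s
        = (∑ u, w u * b s u) - γ * ∑ u, w u * ∑ j, b j u * K j s := by rw [hswap]
      _ = ∑ u, w u * (b s u - γ * ∑ j, b j u * K j s) := by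
          rw [show ∑ u, w u * (b s u - γ * ∑ j, b j u * K j s)
              = (∑ u, w u * b s u) - ∑ u, w u * (γ * ∑ j, b j u * K j s) from by
            rw [← Finset.sum_sub_distrib]
            exact Finset.sum_congr rfl fun u _ => by ring]
          rw [Finset.mul_sum]
          congr 1
          exact Finset.sum_congr rfl fun u _ => by ring
      _ = w s := by
          rw [show ∑ u, w u * (b s u - γ * ∑ j, b j u * K j s)
              = ∑ u, w u * (if u = s then (1:ℝ) else 0) from
            Finset.sum_congr rfl fun u _ => by rw [hbrk]]
          simp
  · -- ℓ¹ bound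
    intro y
    calc ∑ s, |∑ u, y u * b s u| ≤ ∑ s, ∑ u, |y u| * b s u := by
          apply Finset.sum_le_sum
          intro s _
          refine le_trans (Finset.abs_sum_le_sum_abs _ _) ?_
          apply Finset.sum_le_sum
          intro u _
          rw [abs_mul, abs_of_nonneg (hb0 s u)]
      _ = ∑ u, |y u| * ∑ s, b s u := by
          rw [Finset.sum_comm]
          exact Finset.sum_congr rfl fun u _ => by rw [Finset.mul_sum]
      _ = (∑ u, |y u|) / (1 - γ) := by
          rw [show ∑ u, |y u| * ∑ s, b s u = ∑ u, |y u| * (1/(1-γ)) from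
            Finset.sum_congr rfl fun u _ => by rw [hbsum]]
          rw [← Finset.sum_mul, mul_one_div]

private lemma adjoint_inj {S : Type*} [Fintype S] {γ : ℝ}
    (hγ0 : 0 < γ) (hγ1 : γ < 1)
    (K : S → S → ℝ) (hK0 : ∀ s s', 0 ≤ K s s') (hK1 : ∀ s, ∑ s', K s s' = 1)
    (r : S → ℝ) (hr : ∀ s, r s - γ * ∑ s', r s' * K s' s = 0) : r = 0 := by
  have hb : ∑ s, |r s| ≤ γ * ∑ s, |r s| := by
    calc ∑ s, |r s| = ∑ s, γ * |∑ s', r s' * K s' s| := by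
          apply Finset.sum_congr rfl
          intro s _
          have := hr s
          have h1 : r s = γ * ∑ s', r s' * K s' s := by linarith
          rw [h1, abs_mul, abs_of_pos hγ0]
      _ ≤ ∑ s, γ * ∑ s', |r s'| * K s' s := by
          apply Finset.sum_le_sum
          intro s _
          apply mul_le_mul_of_nonneg_left _ hγ0.le
          refine le_trans (Finset.abs_sum_le_sum_abs _ _) ?_
          apply Finset.sum_le_sum
          intro s' _
          rw [abs_mul, abs_of_nonneg (hK0 s' s)]
      _ = γ * ∑ s', |r s'| := by
          rw [← Finset.mul_sum]
          congr 1
          rw [Finset.sum_comm]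
          apply Finset.sum_congr rfl
          intro s' _
          rw [← Finset.mul_sum, hK1, mul_one]
  have h0 : ∑ s, |r s| ≤ 0 := by nlinarith
  have h1 : ∀ s ∈ Finset.univ, |r s| = 0 := by
    rw [← Finset.sum_eq_zero_iff_of_nonneg (fun s _ => abs_nonneg (r s))]
    exact le_antisymm h0 (Finset.sum_nonneg fun s _ => abs_nonneg (r s))
  funext s
  simpa using abs_eq_zero.mp (h1 s (Finset.mem_univ s))

/-- **TRPO policy improvement lower bound** (Schulman et al.).
With `ε = max_{s,a} |A_π(s,a)|` and `C = 4εγ/(1−γ)²`,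
`J(π') − J(π) ≥ L_π(π') − C · max_s D_KL(π(·|s) ∥ π'(·|s))`,
where `L_π(π') = Σ_s ρ_π(s) Σ_a π'(a|s) A_π(s,a)` is the surrogate advantage
computed under the discounted state-visitation frequency `ρ_π` of `π`. -/
theorem trpo_policy_improvement_lower_bound
    {S A : Type*} [Fintype S] [Fintype A] [Nonempty S] [Nonempty A]
    (P : S → A → S → ℝ) (R : S → A → ℝ) (γ : ℝ) (μ : S → ℝ)
    (π π' : S → A → ℝ) (V V' ρ : S → ℝ)
    (hγ : 0 < γ) (hγ1 : γ < 1)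
    (hP0 : ∀ s a s', 0 ≤ P s a s') (hP1 : ∀ s a, ∑ s', P s a s' = 1)
    (hμ0 : ∀ s, 0 ≤ μ s) (hμ1 : ∑ s, μ s = 1)
    (hπ0 : ∀ s a, 0 ≤ π s a) (hπ1 : ∀ s, ∑ a, π s a = 1)
    (hπ'0 : ∀ s a, 0 < π' s a) (hπ'1 : ∀ s, ∑ a, π' s a = 1)
    (hV : ∀ s, V s = ∑ a, π s a * (R s a + γ * ∑ s', P s a s' * V s'))
    (hV' : ∀ s, V' s = ∑ a, π' s a * (R s a + γ * ∑ s', P s a s' * V' s'))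
    -- discounted state-visitation frequency of π from initial distribution μ
    (hρ : ∀ s, ρ s = μ s + γ * ∑ s', ∑ a, ρ s' * π s' a * P s' a s)
    (Q Adv : S → A → ℝ)
    (hQ : ∀ s a, Q s a = R s a + γ * ∑ s', P s a s' * V s')
    (hAdv : ∀ s a, Adv s a = Q s a - V s)
    (ε C L maxKL : ℝ)
    (hε : ε = Finset.univ.sup' Finset.univ_nonempty
        (fun sa : S × A => |Adv sa.1 sa.2|))
    (hC : C = 4 * ε * γ / (1 - γ) ^ 2)
    (hL : L = ∑ s, ρ s * ∑ a, π' s a * Adv s a)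
    (hmaxKL : maxKL = Finset.univ.sup' Finset.univ_nonempty
        (fun s => ∑ a, π s a * Real.log (π s a / π' s a))) :
    (∑ s, μ s * V' s) - (∑ s, μ s * V s) ≥ L - C * maxKL := by
  classical
  have hγ1' : (0:ℝ) < 1 - γ := by linarith
  -- Markov matrices of π and π'
  set M : S → S → ℝ := fun s s' => ∑ a, π s a * P s a s' with hMdef
  set M' : S → S → ℝ := fun s s' => ∑ a, π' s a * P s a s' with hM'def
  have hM0 : ∀ s s', 0 ≤ M s s' := fun s s' =>
    Finset.sum_nonneg fun a _ => mul_nonneg (hπ0 s a) (hP0 s a s')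
  have hM'0 : ∀ s s', 0 ≤ M' s s' := fun s s' =>
    Finset.sum_nonneg fun a _ => mul_nonneg (hπ'0 s a).le (hP0 s a s')
  have hM1 : ∀ s, ∑ s', M s s' = 1 := by
    intro s
    rw [show ∑ s', M s s' = ∑ a, π s a * ∑ s', P s a s' from by
      rw [Finset.sum_comm]
      exact Finset.sum_congr rfl fun a _ => by rw [Finset.mul_sum]]
    simp only [hP1, mul_one]
    exact hπ1 s
  have hM'1 : ∀ s, ∑ s', M' s s' = 1 := by
    intro s
    rw [show ∑ s', M' s s' = ∑ a, π' s a * ∑ s', P s a s' from by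
      rw [Finset.sum_comm]
      exact Finset.sum_congr rfl fun a _ => by rw [Finset.mul_sum]]
    simp only [hP1, mul_one]
    exact hπ'1 s
  obtain ⟨b, hb0, hbsum, hbU, hbL1⟩ := stoch_resolvent hγ hγ1 M' hM'0 hM'1
  obtain ⟨c, hc0, hcsum, hcU, hcL1⟩ := stoch_resolvent hγ hγ1 M hM0 hM1
  -- expected advantage under π'
  set Abar : S → ℝ := fun s => ∑ a, π' s a * Adv s a with hAbar
  set Dtv : S → ℝ := fun s => ∑ a, |π' s a - π s a| with hDtv
  set β : ℝ := Finset.univ.sup' Finset.univ_nonempty Dtv with hβ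
  have hDβ : ∀ s, Dtv s ≤ β := fun s => Finset.le_sup' Dtv (Finset.mem_univ s)
  have hD0 : ∀ s, 0 ≤ Dtv s := fun s => Finset.sum_nonneg fun a _ => abs_nonneg _
  have hβ0 : 0 ≤ β := le_trans (hD0 (Classical.arbitrary S)) (hDβ _)
  have hε0 : ∀ s a, |Adv s a| ≤ ε := by
    intro s a
    rw [hε]
    exact Finset.le_sup' (fun sa : S × A => |Adv sa.1 sa.2|) (Finset.mem_univ (s, a))
  have hεnn : 0 ≤ ε := le_trans (abs_nonneg _) (hε0 (Classical.arbitrary S) (Classical.arbitrary A))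
  -- ρ satisfies the adjoint equation w.r.t. M
  have hUρ : ∀ s, ρ s - γ * ∑ s', ρ s' * M s' s = μ s := by
    intro s
    have h := hρ s
    rw [show ∑ s', ∑ a, ρ s' * π s' a * P s' a s = ∑ s', ρ s' * M s' s from
      Finset.sum_congr rfl fun s' _ => by
        simp only [hMdef]
        rw [Finset.mul_sum]
        exact Finset.sum_congr rfl fun a _ => by ring] at h
    linarith
  -- total mass of ρ
  have hρsum : ∑ s, ρ s = 1 / (1 - γ) := by
    have h : ∑ s, ρ s = 1 + γ * ∑ s, ρ s := by
      calc ∑ s, ρ s = ∑ s, (μ s + γ * ∑ s', ∑ a, ρ s' * π s' a * P s' a s) :=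
            Finset.sum_congr rfl fun s _ => hρ s
        _ = 1 + γ * ∑ s, ∑ s', ∑ a, ρ s' * π s' a * P s' a s := by
            rw [Finset.sum_add_distrib, hμ1, ← Finset.mul_sum]
        _ = 1 + γ * ∑ s', ∑ a, ρ s' * π s' a * ∑ s, P s' a s := by
            congr 1
            congr 1
            rw [Finset.sum_comm]
            refine Finset.sum_congr rfl fun s' _ => ?_
            rw [Finset.sum_comm]
            exact Finset.sum_congr rfl fun a _ => by rw [Finset.mul_sum]
        _ = 1 + γ * ∑ s', ρ s' := by
            congr 1
            congr 1
            refine Finset.sum_congr rfl fun s' _ => ?_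
            rw [show ∑ a, ρ s' * π s' a * ∑ s, P s' a s = ∑ a, ρ s' * π s' a from
              Finset.sum_congr rfl fun a _ => by rw [hP1, mul_one]]
            rw [← Finset.mul_sum, hπ1, mul_one]
    rw [eq_div_iff (by linarith : (1:ℝ) - γ ≠ 0)]
    linarith
  -- ρ is nonnegative
  have hρ0 : ∀ s, 0 ≤ ρ s := by
    have hform : ∀ s, ρ s = ∑ u, μ u * c s u := by
      have hz := adjoint_inj hγ hγ1 M hM0 hM1 (fun s => ρ s - ∑ u, μ u * c s u) ?_
      · intro s
        have := congrFun hz s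
        simp only [Pi.zero_apply] at this
        linarith
      · intro s
        have h1 := hUρ s
        have h2 := hcU μ s
        have h3 : ∑ s', (ρ s' - ∑ u, μ u * c s' u) * M s' s
            = (∑ s', ρ s' * M s' s) - ∑ s', (∑ u, μ u * c s' u) * M s' s := by
          rw [← Finset.sum_sub_distrib]
          exact Finset.sum_congr rfl fun s' _ => by ring
        rw [h3, mul_sub]
        beta_reduce
        linarith [h1, h2]
    intro s
    rw [hform s]
    exact Finset.sum_nonneg fun u _ => mul_nonneg (hμ0 u) (hc0 s u)
  -- visitation of π'
  set ρ' : S → ℝ := fun s => ∑ u, μ u * b s u with hρ'def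
  have hUρ' : ∀ s, ρ' s - γ * ∑ s', ρ' s' * M' s' s = μ s := fun s => hbU μ s
  -- zero mean of advantage under π
  have hVQ : ∀ s, ∑ a, π s a * Q s a = V s := by
    intro s
    rw [hV s]
    exact Finset.sum_congr rfl fun a _ => by rw [hQ]
  have hmean0 : ∀ s, ∑ a, π s a * Adv s a = 0 := by
    intro s
    rw [show ∑ a, π s a * Adv s a = (∑ a, π s a * Q s a) - (∑ a, π s a) * V s from by
      rw [Finset.sum_mul, ← Finset.sum_sub_distrib]
      exact Finset.sum_congr rfl fun a _ => by rw [hAdv]; ring]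
    rw [hVQ, hπ1, one_mul, sub_self]
  -- Abar bound
  have hAbarbound : ∀ s, |Abar s| ≤ ε * Dtv s := by
    intro s
    have h1 : Abar s = ∑ a, (π' s a - π s a) * Adv s a := by
      simp only [hAbar]
      rw [show ∑ a, (π' s a - π s a) * Adv s a
          = (∑ a, π' s a * Adv s a) - ∑ a, π s a * Adv s a from by
        rw [← Finset.sum_sub_distrib]
        exact Finset.sum_congr rfl fun a _ => by ring]
      rw [hmean0, sub_zero]
    rw [h1]
    refine le_trans (Finset.abs_sum_le_sum_abs _ _) ?_
    rw [show ε * Dtv s = ∑ a, |π' s a - π s a| * ε from by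
      simp only [hDtv]
      rw [mul_comm, Finset.sum_mul]]
    apply Finset.sum_le_sum
    intro a _
    rw [abs_mul]
    exact mul_le_mul_of_nonneg_left (hε0 s a) (abs_nonneg _)
  -- Bellman-type equation for V' and for Abar
  have hV'2 : ∀ s, V' s = (∑ a, π' s a * R s a) + γ * ∑ s', M' s s' * V' s' := by
    intro s
    rw [hV' s]
    rw [show ∑ a, π' s a * (R s a + γ * ∑ s', P s a s' * V' s')
        = (∑ a, π' s a * R s a) + γ * ∑ a, π' s a * ∑ s', P s a s' * V' s' from by
      rw [Finset.mul_sum, ← Finset.sum_add_distrib]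
      exact Finset.sum_congr rfl fun a _ => by ring]
    congr 1
    congr 1
    rw [show ∑ a, π' s a * ∑ s', P s a s' * V' s' = ∑ a, ∑ s', π' s a * P s a s' * V' s' from
      Finset.sum_congr rfl fun a _ => by
        rw [Finset.mul_sum]; exact Finset.sum_congr rfl fun s' _ => by ring]
    rw [Finset.sum_comm]
    refine Finset.sum_congr rfl fun s' _ => ?_
    simp only [hM'def]
    rw [Finset.sum_mul]
  have hAbar2 : ∀ s, Abar s = (∑ a, π' s a * R s a) + γ * (∑ s', M' s s' * V s') - V s := by
    intro s
    simp only [hAbar]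
    rw [show ∑ a, π' s a * Adv s a
        = (∑ a, π' s a * (R s a + γ * ∑ s', P s a s' * V s')) - (∑ a, π' s a) * V s from by
      rw [Finset.sum_mul, ← Finset.sum_sub_distrib]
      refine Finset.sum_congr rfl fun a _ => ?_
      rw [hAdv, hQ]
      ring]
    rw [hπ'1, one_mul]
    congr 1
    rw [show ∑ a, π' s a * (R s a + γ * ∑ s', P s a s' * V s')
        = (∑ a, π' s a * R s a) + γ * ∑ a, π' s a * ∑ s', P s a s' * V s' from by
      rw [Finset.mul_sum, ← Finset.sum_add_distrib]
      exact Finset.sum_congr rfl fun a _ => by ring]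
    congr 1
    congr 1
    rw [show ∑ a, π' s a * ∑ s', P s a s' * V s' = ∑ a, ∑ s', π' s a * P s a s' * V s' from
      Finset.sum_congr rfl fun a _ => by
        rw [Finset.mul_sum]; exact Finset.sum_congr rfl fun s' _ => by ring]
    rw [Finset.sum_comm]
    refine Finset.sum_congr rfl fun s' _ => ?_
    simp only [hM'def]
    rw [Finset.sum_mul]
  -- the fundamental equation for V' - V
  have hx : ∀ s, (V' s - V s) - γ * ∑ s', M' s s' * (V' s' - V s') = Abar s := by
    intro s
    have h1 := hV'2 s
    have h2 := hAbar2 s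
    have h3 : ∑ s', M' s s' * (V' s' - V s')
        = (∑ s', M' s s' * V' s') - ∑ s', M' s s' * V s' := by
      rw [← Finset.sum_sub_distrib]
      exact Finset.sum_congr rfl fun s' _ => by ring
    rw [h3]
    have h4 : γ * ((∑ s', M' s s' * V' s') - ∑ s', M' s s' * V s')
        = γ * (∑ s', M' s s' * V' s') - γ * ∑ s', M' s s' * V s' := by ring
    linarith [h4]
  -- performance difference identity
  have hPD : (∑ s, μ s * V' s) - (∑ s, μ s * V s) = ∑ s, ρ' s * Abar s := by
    have hswap : ∑ s, ρ' s * (γ * ∑ s', M' s s' * (V' s' - V s'))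
        = γ * ∑ s', (∑ s, ρ' s * M' s s') * (V' s' - V s') := by
      rw [Finset.mul_sum]
      rw [show ∑ s, ρ' s * (γ * ∑ s', M' s s' * (V' s' - V s'))
          = ∑ s, ∑ s', γ * (ρ' s * M' s s' * (V' s' - V s')) from
        Finset.sum_congr rfl fun s _ => by
          rw [Finset.mul_sum, Finset.mul_sum]
          exact Finset.sum_congr rfl fun s' _ => by ring]
      rw [Finset.sum_comm]
      refine Finset.sum_congr rfl fun s' _ => ?_
      rw [Finset.sum_mul, Finset.mul_sum]
    calc (∑ s, μ s * V' s) - (∑ s, μ s * V s) = ∑ s, μ s * (V' s - V s) := by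
          rw [← Finset.sum_sub_distrib]
          exact Finset.sum_congr rfl fun s _ => by ring
      _ = ∑ s, (ρ' s - γ * ∑ s', ρ' s' * M' s' s) * (V' s - V s) :=
          Finset.sum_congr rfl fun s _ => by rw [hUρ' s]
      _ = ∑ s, ρ' s * (V' s - V s) - γ * ∑ s, (∑ s', ρ' s' * M' s' s) * (V' s - V s) := by
          rw [Finset.mul_sum, ← Finset.sum_sub_distrib]
          exact Finset.sum_congr rfl fun s _ => by ring
      _ = ∑ s, ρ' s * (V' s - V s) - ∑ s, ρ' s * (γ * ∑ s', M' s s' * (V' s' - V s')) := by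
          congr 1
          rw [hswap]
      _ = ∑ s, ρ' s * ((V' s - V s) - γ * ∑ s', M' s s' * (V' s' - V s')) := by
          rw [← Finset.sum_sub_distrib]
          exact Finset.sum_congr rfl fun s _ => by ring
      _ = ∑ s, ρ' s * Abar s := Finset.sum_congr rfl fun s _ => by rw [hx s]
  -- the difference of visitation measures
  set d : S → ℝ := fun s => ρ' s - ρ s with hddef
  set y : S → ℝ := fun s => γ * ∑ s', ρ s' * (M' s' s - M s' s) with hydef
  have hUd : ∀ s, d s - γ * ∑ s', d s' * M' s' s = y s := by
    intro s
    have h1 := hUρ' s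
    have h2 := hUρ s
    simp only [hddef, hydef]
    have e1 : ∑ s', (ρ' s' - ρ s') * M' s' s
        = (∑ s', ρ' s' * M' s' s) - ∑ s', ρ s' * M' s' s := by
      rw [← Finset.sum_sub_distrib]
      exact Finset.sum_congr rfl fun s' _ => by ring
    have e2 : ∑ s', ρ s' * (M' s' s - M s' s)
        = (∑ s', ρ s' * M' s' s) - ∑ s', ρ s' * M s' s := by
      rw [← Finset.sum_sub_distrib]
      exact Finset.sum_congr rfl fun s' _ => by ring
    rw [e1, e2, mul_sub, mul_sub]
    linarith [h1, h2]
  -- representation of d and ℓ¹ bound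
  have hdrep : ∀ s, d s = ∑ u, y u * b s u := by
    have hz := adjoint_inj hγ hγ1 M' hM'0 hM'1 (fun s => d s - ∑ u, y u * b s u) ?_
    · intro s
      have := congrFun hz s
      simp only [Pi.zero_apply] at this
      linarith
    · intro s
      have h1 := hUd s
      have h2 := hbU y s
      have h3 : ∑ s', (d s' - ∑ u, y u * b s' u) * M' s' s
          = (∑ s', d s' * M' s' s) - ∑ s', (∑ u, y u * b s' u) * M' s' s := by
        rw [← Finset.sum_sub_distrib]
        exact Finset.sum_congr rfl fun s' _ => by ring
      rw [h3, mul_sub]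
      beta_reduce
      linarith [h1, h2]
  have hdL1 : ∑ s, |d s| ≤ (∑ u, |y u|) / (1 - γ) := by
    calc ∑ s, |d s| = ∑ s, |∑ u, y u * b s u| :=
          Finset.sum_congr rfl fun s _ => by rw [hdrep s]
      _ ≤ (∑ u, |y u|) / (1 - γ) := hbL1 y
  -- ℓ¹ bound on y
  have hMrowdiff : ∀ s', ∑ s, |M' s' s - M s' s| ≤ Dtv s' := by
    intro s'
    calc ∑ s, |M' s' s - M s' s| ≤ ∑ s, ∑ a, |π' s' a - π s' a| * P s' a s := by
          apply Finset.sum_le_sum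
          intro s _
          rw [show M' s' s - M s' s = ∑ a, (π' s' a - π s' a) * P s' a s from by
            simp only [hM'def, hMdef]
            rw [← Finset.sum_sub_distrib]
            exact Finset.sum_congr rfl fun a _ => by ring]
          refine le_trans (Finset.abs_sum_le_sum_abs _ _) ?_
          apply Finset.sum_le_sum
          intro a _
          rw [abs_mul, abs_of_nonneg (hP0 s' a s)]
      _ = ∑ a, |π' s' a - π s' a| * ∑ s, P s' a s := by
          rw [Finset.sum_comm]
          exact Finset.sum_congr rfl fun a _ => by rw [Finset.mul_sum]
      _ = Dtv s' := by
          simp only [hDtv]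
          exact Finset.sum_congr rfl fun a _ => by rw [hP1, mul_one]
  have hyL1 : ∑ s, |y s| ≤ γ * β / (1 - γ) := by
    calc ∑ s, |y s| ≤ ∑ s, γ * ∑ s', ρ s' * |M' s' s - M s' s| := by
          apply Finset.sum_le_sum
          intro s _
          simp only [hydef]
          rw [abs_mul, abs_of_pos hγ]
          apply mul_le_mul_of_nonneg_left _ hγ.le
          refine le_trans (Finset.abs_sum_le_sum_abs _ _) ?_
          apply Finset.sum_le_sum
          intro s' _
          rw [abs_mul, abs_of_nonneg (hρ0 s')]
      _ = γ * ∑ s', ρ s' * ∑ s, |M' s' s - M s' s| := by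
          rw [← Finset.mul_sum]
          congr 1
          rw [Finset.sum_comm]
          exact Finset.sum_congr rfl fun s' _ => by rw [Finset.mul_sum]
      _ ≤ γ * ∑ s', ρ s' * β := by
          apply mul_le_mul_of_nonneg_left _ hγ.le
          apply Finset.sum_le_sum
          intro s' _
          exact mul_le_mul_of_nonneg_left (le_trans (hMrowdiff s') (hDβ s')) (hρ0 s')
      _ = γ * β / (1 - γ) := by
          rw [← Finset.sum_mul, hρsum]
          rw [div_mul_eq_mul_div, one_mul, mul_div_assoc]
  -- the error term
  have herr : |∑ s, d s * Abar s| ≤ γ * β / (1 - γ) ^ 2 * (ε * β) := by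
    calc |∑ s, d s * Abar s| ≤ ∑ s, |d s| * (ε * β) := by
          refine le_trans (Finset.abs_sum_le_sum_abs _ _) ?_
          apply Finset.sum_le_sum
          intro s _
          rw [abs_mul]
          apply mul_le_mul_of_nonneg_left _ (abs_nonneg (d s))
          exact le_trans (hAbarbound s)
            (mul_le_mul_of_nonneg_left (hDβ s) hεnn)
      _ = (∑ s, |d s|) * (ε * β) := by rw [Finset.sum_mul]
      _ ≤ ((∑ u, |y u|) / (1 - γ)) * (ε * β) := by
          apply mul_le_mul_of_nonneg_right hdL1 (mul_nonneg hεnn hβ0)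
      _ ≤ (γ * β / (1 - γ) / (1 - γ)) * (ε * β) := by
          apply mul_le_mul_of_nonneg_right _ (mul_nonneg hεnn hβ0)
          exact (div_le_div_iff_of_pos_right hγ1').mpr hyL1
      _ = γ * β / (1 - γ) ^ 2 * (ε * β) := by
          rw [div_div, sq]
  -- Pinsker: β² ≤ 4 maxKL
  have hKLn : ∀ s, (∑ a, π s a * Real.log (π s a / π' s a)) ≤ maxKL := by
    intro s
    rw [hmaxKL]
    exact Finset.le_sup' (fun s => ∑ a, π s a * Real.log (π s a / π' s a))
      (Finset.mem_univ s)
  have hpinsker : β ^ 2 / 4 ≤ maxKL := by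
    obtain ⟨s0, -, hs0⟩ := Finset.exists_mem_eq_sup' Finset.univ_nonempty Dtv
    have h1 := pinsker_quarter (fun a => π s0 a) (fun a => π' s0 a)
      (fun a => hπ0 s0 a) (fun a => hπ'0 s0 a) (hπ1 s0) (hπ'1 s0)
    have h2 : Dtv s0 = ∑ a, |π s0 a - π' s0 a| := by
      simp only [hDtv]
      exact Finset.sum_congr rfl fun a _ => by rw [abs_sub_comm]
    rw [hβ, hs0, h2]
    exact le_trans h1 (hKLn s0)
  -- conclusion
  have hLA : L = ∑ s, ρ s * Abar s := hL
  have hsplit : ∑ s, ρ' s * Abar s = L + ∑ s, d s * Abar s := by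
    rw [hLA, ← Finset.sum_add_distrib]
    refine Finset.sum_congr rfl fun s _ => ?_
    simp only [hddef]
    ring
  rw [ge_iff_le, hPD, hsplit]
  have h1 : -(γ * β / (1 - γ) ^ 2 * (ε * β)) ≤ ∑ s, d s * Abar s := by
    have h2 := neg_abs_le (∑ s, d s * Abar s)
    linarith [herr]
  have h3 : γ * β / (1 - γ) ^ 2 * (ε * β) ≤ C * maxKL := by
    have h5 : ε * γ * β ^ 2 ≤ 4 * ε * γ * maxKL := by
      nlinarith [mul_le_mul_of_nonneg_left hpinsker (mul_nonneg hεnn hγ.le)]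
    have h6 : γ * β / (1 - γ) ^ 2 * (ε * β) = ε * γ * β ^ 2 / (1 - γ) ^ 2 := by ring
    have h7 : C * maxKL = 4 * ε * γ * maxKL / (1 - γ) ^ 2 := by rw [hC]; ring
    rw [h6, h7]
    rw [div_le_div_iff₀ (by positivity) (by positivity)]
    exact mul_le_mul_of_nonneg_right h5 (sq_nonneg _)
  linarith
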